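/- arXiv:math/0511151 — 2 statements merged into one kernel-verified Lean document; each statement's English description precedes it below -/
import Mathlib

section
/- Let K ⊆ ℝⁿ be a measurable set with finite measure and let p be a positive integer. Then Per(χ_K)(ξ) ≤ p for a.e. ξ ∈ ℝⁿ if and only if there exists a measurable partition K₁, …, K_p of K such that for every i ∈ {1, …, p} and every k ∈ ℤⁿ \ {0} the set K_i ∩ (K_i + 2kπ) is null. -/
open MeasureTheory Complex Filter Topology Matrix
open scoped ENNReal ComplexConjugate

noncomputable section

abbrev Rn (n : ℕ) := Fin n → ℝ
abbrev Zn (n : ℕ) := Fin n → ℤ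
abbrev L2 (n : ℕ) := Lp ℂ 2 (volume : Measure (Rn n))
abbrev l2Z (n : ℕ) := lp (fun _ : Zn n => ℂ) 2

/-- The vector `2sπ` for `s ∈ ℤⁿ`. -/
def twoPi {n : ℕ} (s : Zn n) : Rn n := fun i => 2 * Real.pi * (s i : ℝ)

open Classical in
/-- The element of `L²(ℝⁿ)` determined by a square-integrable function (junk value `0` otherwise). -/
def toL2 {n : ℕ} (f : Rn n → ℂ) : L2 n := if h : MemLp f 2 volume then h.toLp f else 0

open Classical in
/-- The element of `ℓ²(ℤⁿ)` determined by a square-summable sequence (junk value `0` otherwise). -/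
def tol2 {n : ℕ} (a : Zn n → ℂ) : l2Z n := if h : Memℓp a 2 then ⟨a, h⟩ else 0

/-- Translation: `(T_k f)(x) = f (x - k)`. -/
def Tk {n : ℕ} (k : Zn n) (f : Rn n → ℂ) : Rn n → ℂ := fun x => f (x - fun i => (k i : ℝ))

/-- The real matrix associated with an integer matrix. -/
def matR {n : ℕ} (A : Matrix (Fin n) (Fin n) ℤ) : Matrix (Fin n) (Fin n) ℝ :=
  A.map (Int.cast : ℤ → ℝ)

/-- Dilation: `(D_B f)(x) = |det B|^{1/2} f (Bx)`. -/
def DA {n : ℕ} (B : Matrix (Fin n) (Fin n) ℝ) (f : Rn n → ℂ) : Rn n → ℂ :=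
  fun x => (Real.sqrt |B.det| : ℂ) * f (B.mulVec x)

/-- A dilation matrix: integer entries, all (complex) eigenvalues of modulus `> 1`. -/
def IsDilationMatrix {n : ℕ} (A : Matrix (Fin n) (Fin n) ℤ) : Prop :=
  (matR A).det ≠ 0 ∧
    ∀ z : ℂ, (Matrix.charpoly (A.map (Int.cast : ℤ → ℂ))).IsRoot z → 1 < ‖z‖

/-- The Fourier integral `f̂(ξ) = ∫ f(x) e^{-i⟨x,ξ⟩} dx` (defined for integrable `f`). -/
def ftIntegral {n : ℕ} (f : Rn n → ℂ) (ξ : Rn n) : ℂ :=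
  ∫ x : Rn n, f x * Complex.exp (-Complex.I * (∑ i, x i * ξ i : ℝ))

/-- `g` is (a pointwise representative of) the `L²`-Fourier transform of `f`, characterized by
Parseval's relation `⟨g, ĥ⟩ = (2π)^n ⟨f, h⟩` against all test functions `h ∈ L¹ ∩ L²`. -/
def HasFT {n : ℕ} (f g : Rn n → ℂ) : Prop :=
  MemLp f 2 volume ∧ MemLp g 2 volume ∧
    ∀ h : Rn n → ℂ, Integrable h volume → MemLp h 2 volume →
      ∫ ξ : Rn n, g ξ * conj (ftIntegral h ξ) =
        (((2 * Real.pi) ^ n : ℝ) : ℂ) * ∫ x : Rn n, f x * conj (h x)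

/-- `(e_i)` is a normalized tight frame for the closed subspace `V`. -/
def IsNTF {ι H : Type*} [NormedAddCommGroup H] [InnerProductSpace ℂ H]
    (V : Submodule ℂ H) (e : ι → H) : Prop :=
  (∀ i, e i ∈ V) ∧ ∀ f ∈ V, ∑' i, ‖(inner ℂ f (e i) : ℂ)‖ ^ 2 = ‖f‖ ^ 2

/-- `Φ` is a NTF generator for `V`: the translates `T_k φ` form a NTF for `V`. -/
def IsNTFGen {n : ℕ} {ι : Type*} (V : Submodule ℂ (L2 n)) (φ : ι → Rn n → ℂ) : Prop :=
  IsNTF V fun p : Zn n × ι => toL2 (Tk p.1 (φ p.2))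

/-- A generalized multiresolution analysis for the dilation matrix `A`. -/
structure GMRA (n : ℕ) (A : Matrix (Fin n) (Fin n) ℤ) where
  V : ℤ → Submodule ℂ (L2 n)
  closed : ∀ j, IsClosed (V j : Set (L2 n))
  mono : ∀ j, V j ≤ V (j + 1)
  dilate : ∀ (j : ℤ) (f : Rn n → ℂ), MemLp f 2 volume →
    (toL2 f ∈ V j ↔ toL2 (DA (matR A) f) ∈ V (j + 1))
  dense_union : Dense (⋃ j : ℤ, (V j : Set (L2 n)))
  inter_bot : (⨅ j : ℤ, V j) = ⊥
  shift_inv : ∀ (k : Zn n) (f : L2 n), f ∈ V 0 ↔ toL2 (Tk k (f : Rn n → ℂ)) ∈ V 0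

/-- A closed subspace of `L²(ℝⁿ)` is shift invariant if it is invariant under all
integer translations. -/
def IsShiftInvariant {n : ℕ} (V : Submodule ℂ (L2 n)) : Prop :=
  ∀ (k : Zn n) (f : L2 n), f ∈ V ↔ toL2 (Tk k (f : Rn n → ℂ)) ∈ V

/-- The shift `λ(k)` on sequences: `(λ(k)α)(l) = α(l - k)`. -/
def shiftSeq {n : ℕ} (k : Zn n) (a : Zn n → ℂ) : Zn n → ℂ := fun l => a (l - k)

/-- A measurable periodic range function, given by its (orthogonal-projection) values. -/
structure PRF (n : ℕ) where
  P : Rn n → l2Z n →L[ℂ] l2Z n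
  idem : ∀ ξ, (P ξ).comp (P ξ) = P ξ
  selfadj : ∀ (ξ : Rn n) (a b : l2Z n), (inner ℂ (P ξ a) b : ℂ) = inner ℂ a (P ξ b)
  meas : ∀ a b : l2Z n, Measurable fun ξ => (inner ℂ (P ξ a) b : ℂ)
  periodic : ∀ (k : Zn n) (ξ : Rn n) (a : l2Z n),
    P (ξ + twoPi k) a = tol2 (shiftSeq (-k) ((P ξ (tol2 (shiftSeq k (a : Zn n → ℂ)))) : Zn n → ℂ))

/-- The fiberization map `𝒯f(ξ) = (f̂(ξ+2kπ))_k ∈ ℓ²(ℤⁿ)`, applied to the Fourier transform `g`. -/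
def Tper {n : ℕ} (g : Rn n → ℂ) (ξ : Rn n) : l2Z n := tol2 fun k => g (ξ + twoPi k)

/-- `J` is the periodic range function of the shift invariant space `V`:
`V = {f : 𝒯f(ξ) ∈ J(ξ) for a.e. ξ}`. -/
def IsRangeFunctionOf {n : ℕ} (J : PRF n) (V : Submodule ℂ (L2 n)) : Prop :=
  ∀ f g : Rn n → ℂ, HasFT f g →
    (toL2 f ∈ V ↔ ∀ᵐ ξ : Rn n, J.P ξ (Tper g ξ) = Tper g ξ)

/-- The periodization `Per(g)(ξ) = ∑_{k∈ℤⁿ} g(ξ + 2kπ)`. -/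
def Per {n : ℕ} (g : Rn n → ℝ) (ξ : Rn n) : ℝ := ∑' k : Zn n, g (ξ + twoPi k)

/-- The affine system `{D_A^j T_k ψ}` indexed by `(j,k,i)` is a normalized tight frame for
`L²(ℝⁿ)`, i.e. `Ψ` is a NTF multiwavelet. -/
def IsNTFMultiwavelet {n : ℕ} {ι : Type*} (A : Matrix (Fin n) (Fin n) ℤ)
    (ψ : ι → Rn n → ℂ) : Prop :=
  ∀ f : L2 n,
    ∑' q : ℤ × Zn n × ι,
        ‖(inner ℂ f (toL2 (DA ((matR A) ^ q.1) (Tk q.2.1 (ψ q.2.2)))) : ℂ)‖ ^ 2 = ‖f‖ ^ 2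

end
noncomputable section
namespace PerAux

variable {n : ℕ}

/-! ### Arithmetic of `twoPi` -/

lemma twoPi_add (a b : Zn n) : twoPi (a + b) = twoPi a + twoPi b := by
  funext i; simp [twoPi]; ring

lemma twoPi_zero : twoPi (0 : Zn n) = 0 := by funext i; simp [twoPi]

lemma twoPi_neg (a : Zn n) : twoPi (-a) = -twoPi a := by funext i; simp [twoPi]

lemma twoPi_sub (a b : Zn n) : twoPi (a - b) = twoPi a - twoPi b := by
  rw [sub_eq_add_neg, twoPi_add, twoPi_neg, sub_eq_add_neg]

/-! ### Lexicographic order on `Zn n` -/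

lemma lexlt_irrefl (a : Zn n) : ¬ toLex a < toLex a := irrefl_of (· < ·) _

lemma lexlt_trans {a b c : Zn n} (h1 : toLex a < toLex b) (h2 : toLex b < toLex c) :
    toLex a < toLex c := trans_of (· < ·) h1 h2

lemma lexlt_trichotomy (a b : Zn n) : toLex a < toLex b ∨ a = b ∨ toLex b < toLex a := by
  have := (@Pi.isTrichotomous_lex (Fin n) (fun _ => ℤ) (· < ·) (fun {_} => (· < ·)) _
    IsWellFounded.wf).trichotomous a b
  by_cases h1 : toLex a < toLex b
  · exact Or.inl h1
  by_cases h2 : toLex b < toLex a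
  · exact Or.inr (Or.inr h2)
  exact Or.inr (Or.inl (this h1 h2))

lemma lexlt_add_right {a b : Zn n} (h : toLex a < toLex b) (c : Zn n) :
    toLex (a + c) < toLex (b + c) := by
  obtain ⟨i, hj, hi⟩ := h
  exact ⟨i, fun j hji => by have := hj j hji; simpa using congrArg (· + c j) this,
    by exact (add_lt_add_iff_right (c i)).2 hi⟩

/-! ### Counting lemmas -/

lemma ncard_sep_lt_of_lexlt {s : Set (Zn n)} (hs : s.Finite) {a b : Zn n} (ha : a ∈ s)
    (h : toLex a < toLex b) :
    {m ∈ s | toLex m < toLex a}.ncard < {m ∈ s | toLex m < toLex b}.ncard := by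
  apply Set.ncard_lt_ncard _ (hs.subset (Set.sep_subset _ _))
  constructor
  · exact fun m hm => ⟨hm.1, lexlt_trans hm.2 h⟩
  · intro hsub
    exact lexlt_irrefl a (hsub ⟨ha, h⟩).2

lemma ncard_sep_ne {s : Set (Zn n)} (hs : s.Finite) {a b : Zn n} (ha : a ∈ s) (hb : b ∈ s)
    (hab : a ≠ b) :
    {m ∈ s | toLex m < toLex a}.ncard ≠ {m ∈ s | toLex m < toLex b}.ncard := by
  rcases lexlt_trichotomy a b with h | h | h
  · exact Nat.ne_of_lt (ncard_sep_lt_of_lexlt hs ha h)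
  · exact absurd h hab
  · exact (Nat.ne_of_lt (ncard_sep_lt_of_lexlt hs hb h)).symm

lemma ncard_sep_le {s : Set (Zn n)} (hs : s.Finite) {a : Zn n} (ha : a ∈ s) :
    {m ∈ s | toLex m < toLex a}.ncard ≤ s.ncard - 1 := by
  have h1 : {m ∈ s | toLex m < toLex a} ⊆ s \ {a} := by
    rintro m ⟨hm, hlt⟩
    exact ⟨hm, fun he => lexlt_irrefl a (by simpa [Set.mem_singleton_iff.1 he] using hlt)⟩
  calc {m ∈ s | toLex m < toLex a}.ncard ≤ (s \ {a}).ncard :=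
        Set.ncard_le_ncard h1 hs.diff
    _ = s.ncard - 1 := Set.ncard_diff_singleton_of_mem ha

lemma tsum_real_indicator (s : Set (Zn n)) (hs : s.Finite) :
    ∑' k : Zn n, s.indicator (fun _ => (1:ℝ)) k = s.ncard := by
  rw [tsum_eq_sum (s := hs.toFinset)
    (fun b hb => Set.indicator_of_notMem (by simpa using hb) _)]
  rw [Set.ncard_eq_toFinset_card s hs]
  rw [Finset.sum_congr rfl (fun k hk => Set.indicator_of_mem (by simpa using hk)
    (fun _ => (1:ℝ)))]
  simp

lemma count_finite_eq_ncard (s : Set (Zn n)) (hs : s.Finite) :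
    Measure.count s = s.ncard := by
  rw [Measure.count_apply_finite s hs, Set.ncard_eq_toFinset_card s hs]

lemma count_eq_tsum (s : Set (Zn n)) :
    Measure.count s = ∑' k, s.indicator (fun _ => (1:ℝ≥0∞)) k := by
  rw [Measure.count, Measure.sum_apply _ (s.to_countable.measurableSet)]
  exact tsum_congr fun k => Measure.dirac_apply' _ (s.to_countable.measurableSet)

/-! ### The lattice basis and fundamental domain -/

def latB (n : ℕ) : Module.Basis (Fin n) ℝ (Rn n) :=
  (Pi.basisFun ℝ (Fin n)).isUnitSMul
    (fun _ => (isUnit_iff_ne_zero.2 (by positivity : (2*Real.pi : ℝ) ≠ 0)))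

lemma latB_apply (i : Fin n) : latB n i = (2*Real.pi) • (Pi.basisFun ℝ (Fin n)) i :=
  Module.Basis.isUnitSMul_apply _ _

lemma twoPi_eq_sum (k : Zn n) : twoPi k = ∑ i, k i • latB n i := by
  funext j
  rw [Finset.sum_apply]
  rw [Finset.sum_eq_single j]
  · simp [latB_apply, twoPi, Pi.basisFun_apply, Pi.single_apply, mul_comm]
  · intro i _ hij
    simp [latB_apply, Pi.basisFun_apply, Pi.single_apply, hij]
  · simp

def latE0 : Zn n ≃ Submodule.span ℤ (Set.range (latB n)) where
  toFun k := ((latB n).restrictScalars ℤ).equivFun.symm k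
  invFun g := ((latB n).restrictScalars ℤ).equivFun g
  left_inv _ := LinearEquiv.apply_symm_apply _ _
  right_inv _ := LinearEquiv.symm_apply_apply _ _

def latE : Zn n ≃ (Submodule.span ℤ (Set.range (latB n))).toAddSubgroup :=
  latE0.trans ⟨fun g => ⟨g.1, g.2⟩, fun g => ⟨g.1, g.2⟩, fun _ => rfl, fun _ => rfl⟩

lemma latE_coe (k : Zn n) :
    ((latE k : (Submodule.span ℤ (Set.range (latB n))).toAddSubgroup) : Rn n) = twoPi k := by
  show ((latE0 k : Submodule.span ℤ (Set.range (latB n))) : Rn n) = twoPi k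
  rw [twoPi_eq_sum]
  show ((((latB n).restrictScalars ℤ).equivFun.symm k : _) : Rn n) = _
  rw [Module.Basis.equivFun_symm_apply, AddSubmonoidClass.coe_finset_sum]
  exact Finset.sum_congr rfl fun i _ => by
    rw [Submodule.coe_smul_of_tower, Module.Basis.restrictScalars_apply]

/-! ### The translate-counting function -/

/-- The set of lattice translates of `x` lying in `K`. -/
def Sx (K : Set (Rn n)) (x : Rn n) : Set (Zn n) := {k | x + twoPi k ∈ K}

lemma indicator_Sx (K : Set (Rn n)) (x : Rn n) (k : Zn n) :
    (Sx K x).indicator (fun _ => (1:ℝ≥0∞)) k = K.indicator (fun _ => (1:ℝ≥0∞)) (x + twoPi k) := by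
  by_cases h : x + twoPi k ∈ K <;> simp [Set.indicator_apply, Sx, h]

lemma indicator_Sx_real (K : Set (Rn n)) (x : Rn n) (k : Zn n) :
    (Sx K x).indicator (fun _ => (1:ℝ)) k = K.indicator (fun _ => (1:ℝ)) (x + twoPi k) := by
  by_cases h : x + twoPi k ∈ K <;> simp [Set.indicator_apply, Sx, h]

lemma measurable_inner (K : Set (Rn n)) (hK : MeasurableSet K) (k : Zn n) :
    Measurable (fun x : Rn n => K.indicator (fun _ => (1:ℝ≥0∞)) (x + twoPi k)) :=
  (measurable_const.indicator hK).comp (measurable_add_const (twoPi k))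

lemma measurable_cnt (K : Set (Rn n)) (hK : MeasurableSet K) (T : Set (Zn n)) :
    Measurable (fun x : Rn n => Measure.count (Sx K x ∩ T)) := by
  have : (fun x : Rn n => Measure.count (Sx K x ∩ T)) = fun x =>
      ∑' k : Zn n, T.indicator
        (fun k' => K.indicator (fun _ => (1:ℝ≥0∞)) (x + twoPi k')) k := by
    funext x
    rw [count_eq_tsum]
    refine tsum_congr fun k => ?_
    by_cases hkT : k ∈ T <;> by_cases h : x + twoPi k ∈ K <;>
      simp [Set.indicator_apply, Sx, h, hkT]
  rw [this]
  refine Measurable.ennreal_tsum fun k => ?_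
  by_cases hkT : k ∈ T
  · simp only [Set.indicator_of_mem hkT]
    exact measurable_inner K hK k
  · simp only [Set.indicator_of_notMem hkT]
    exact measurable_const

lemma Sx_shift (K : Set (Rn n)) (x : Rn n) (k : Zn n) :
    Sx K (x + twoPi k) = (fun j => k + j) ⁻¹' (Sx K x) := by
  ext j
  simp only [Sx, Set.mem_setOf_eq, Set.mem_preimage]
  rw [add_assoc, ← twoPi_add]

lemma preimage_addLeft_infinite_iff (s : Set (Zn n)) (k : Zn n) :
    ((fun j => k + j) ⁻¹' s).Infinite ↔ s.Infinite := by
  rw [show (fun j => k + j) ⁻¹' s = (fun j => -k + j) '' s by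
    ext j; constructor
    · intro hj; exact ⟨k + j, hj, neg_add_cancel_left k j⟩
    · rintro ⟨a, ha, rfl⟩; simpa [add_assoc] using ha]
  exact Set.infinite_image_iff (Set.injOn_of_injective (add_right_injective (-k)))

open scoped Pointwise in
lemma ae_finite_Sx (K : Set (Rn n)) (hKm : MeasurableSet K) (hKfin : volume K < ⊤) :
    ∀ᵐ x : Rn n, (Sx K x).Finite := by
  haveI : Countable ((Submodule.span ℤ (Set.range (latB n))).toAddSubgroup) :=
    Countable.of_equiv _ latE
  set D := ZSpan.fundamentalDomain (latB n) with hD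
  have hfd := ZSpan.isAddFundamentalDomain' (latB n) (volume : Measure (Rn n))
  have hcm : Measurable (fun x : Rn n => Measure.count (Sx K x)) := by
    simpa using measurable_cnt K hKm Set.univ
  have key : ∫⁻ x in D, Measure.count (Sx K x) ∂volume = volume K := by
    have h1 : ∀ x : Rn n, Measure.count (Sx K x)
        = ∑' k : Zn n, K.indicator (fun _ => (1:ℝ≥0∞)) (x + twoPi k) := by
      intro x; rw [count_eq_tsum]; exact tsum_congr fun k => indicator_Sx K x k
    calc ∫⁻ x in D, Measure.count (Sx K x) ∂volume
        = ∫⁻ x in D, ∑' k : Zn n, K.indicator (fun _ => (1:ℝ≥0∞)) (x + twoPi k) ∂volume := by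
          simp_rw [h1]
      _ = ∑' k : Zn n, ∫⁻ x in D, K.indicator (fun _ => (1:ℝ≥0∞)) (x + twoPi k) ∂volume :=
          lintegral_tsum fun k => (measurable_inner K hKm k).aemeasurable
      _ = ∑' g : (Submodule.span ℤ (Set.range (latB n))).toAddSubgroup,
            ∫⁻ x in D, K.indicator (fun _ => (1:ℝ≥0∞)) (g +ᵥ x) ∂volume := by
          rw [← latE.tsum_eq]
          refine tsum_congr fun k => ?_
          refine lintegral_congr fun x => ?_
          congr 1
          show x + twoPi k
            = ((latE k : (Submodule.span ℤ (Set.range (latB n))).toAddSubgroup) : Rn n) + x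
          rw [latE_coe k]; exact add_comm _ _
      _ = ∫⁻ x, K.indicator (fun _ => (1:ℝ≥0∞)) x ∂volume :=
          (hfd.lintegral_eq_tsum'' _).symm
      _ = volume K := lintegral_indicator_one hKm
  have hae : ∀ᵐ x ∂(volume.restrict D), Measure.count (Sx K x) < ⊤ :=
    ae_lt_top hcm (by rw [key]; exact hKfin.ne)
  set W := {x : Rn n | Measure.count (Sx K x) = ⊤} with hW
  have hWm : MeasurableSet W := hcm (measurableSet_singleton ⊤)
  have hWD : volume (W ∩ D) = 0 := by
    have h2 := ae_iff.1 hae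
    have h3 : {a : Rn n | ¬Measure.count (Sx K a) < ⊤} = W := by
      ext x
      simp only [hW, Set.mem_setOf_eq]
      rw [not_lt, top_le_iff]
    rw [h3, Measure.restrict_apply hWm] at h2
    exact h2
  have hWinv : ∀ g : (Submodule.span ℤ (Set.range (latB n))).toAddSubgroup, g +ᵥ W = W := by
    intro g
    obtain ⟨k, rfl⟩ := latE.surjective g
    ext x
    rw [Set.mem_vadd_set_iff_neg_vadd_mem]
    have hv : (-(latE k) : (Submodule.span ℤ (Set.range (latB n))).toAddSubgroup) +ᵥ x
        = x + twoPi (-k) := by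
      show -((latE k : (Submodule.span ℤ (Set.range (latB n))).toAddSubgroup) : Rn n) + x = _
      rw [latE_coe k, twoPi_neg]; exact add_comm _ _
    simp only [hW, Set.mem_setOf_eq, hv]
    rw [Measure.count_apply_eq_top, Measure.count_apply_eq_top, Sx_shift]
    exact preimage_addLeft_infinite_iff _ _
  have hW0 : volume W = 0 := hfd.measure_zero_of_invariant W hWinv hWD
  have hfin : {a : Rn n | ¬ (Sx K a).Finite} = W := by
    ext x
    simp only [hW, Set.mem_setOf_eq, Measure.count_apply_eq_top]
    exact Iff.rfl
  rw [ae_iff, hfin]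
  exact hW0

/-! ### Rank functions -/

/-- The set of lattice points of `Sx K x` lexicographically below `a`. -/
def rnkSet (K : Set (Rn n)) (x : Rn n) (a : Zn n) : Set (Zn n) :=
  {m ∈ Sx K x | toLex m < toLex a}

/-- The (extended) rank of `x`. -/
def rkE (K : Set (Rn n)) (x : Rn n) : ℝ≥0∞ :=
  Measure.count (Sx K x ∩ {k | toLex k < toLex (0 : Zn n)})

lemma sep_eq_inter (K : Set (Rn n)) (x : Rn n) :
    Sx K x ∩ {k | toLex k < toLex (0 : Zn n)} = rnkSet K x 0 := by
  ext m; simp [rnkSet, Set.mem_sep_iff, Set.mem_inter_iff]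

lemma measurable_rkE (K : Set (Rn n)) (hK : MeasurableSet K) : Measurable (rkE K) :=
  measurable_cnt K hK _

lemma rkE_eq_ncard (K : Set (Rn n)) (x : Rn n) (hfin : (Sx K x).Finite) :
    rkE K x = ((rnkSet K x 0).ncard : ℝ≥0∞) := by
  rw [rkE, sep_eq_inter]
  exact count_finite_eq_ncard _ (hfin.subset (Set.sep_subset _ _))

lemma rnkSet_shift (K : Set (Rn n)) (x : Rn n) (k : Zn n) :
    (rnkSet K (x - twoPi k) 0).ncard = (rnkSet K x (-k)).ncard := by
  have h0 : x - twoPi k = x + twoPi (-k) := by rw [twoPi_neg, sub_eq_add_neg]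
  have him : rnkSet K (x - twoPi k) 0 = (fun m => k + m) '' rnkSet K x (-k) := by
    ext j
    constructor
    · rintro ⟨hj1, hj2⟩
      rw [h0, Sx_shift] at hj1
      refine ⟨-k + j, ⟨hj1, ?_⟩, add_neg_cancel_left k j⟩
      have h2 := lexlt_add_right hj2 (-k)
      rw [zero_add] at h2
      show toLex (-k + j) < toLex (-k)
      rwa [add_comm]
    · rintro ⟨m, ⟨hm1, hm2⟩, rfl⟩
      have h2 := lexlt_add_right hm2 k
      rw [neg_add_cancel] at h2
      constructor
      · show k + m ∈ Sx K (x - twoPi k)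
        rw [h0, Sx_shift]
        show -k + (k + m) ∈ Sx K x
        rwa [neg_add_cancel_left]
      · show toLex (k + m) < toLex 0
        rwa [add_comm]
  rw [him, Set.ncard_image_of_injective _ (add_right_injective k)]

/-! ### The `Per`-to-cardinality bridge -/

lemma Per_eq_ncard (K : Set (Rn n)) (x : Rn n) (hfin : (Sx K x).Finite) :
    Per (K.indicator fun _ => (1:ℝ)) x = (Sx K x).ncard := by
  rw [Per, ← tsum_real_indicator _ hfin]
  exact tsum_congr fun k => (indicator_Sx_real K x k).symm

end PerAux
end

open PerAux

/-- A set `K` of finite measure satisfies `Per(χ_K) ≤ p` a.e. iff it admits a measurable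
partition `K₁,…,K_p` no piece of which meets any of its nontrivial `2πℤⁿ`-translates in a set
of positive measure. -/
theorem periodization_le_iff_partition
    {n : ℕ} (hn : 0 < n) (K : Set (Rn n)) (hKm : MeasurableSet K)
    (hKfin : volume K < ⊤) (p : ℕ) (hp : 0 < p) :
    (∀ᵐ ξ : Rn n, Per (K.indicator fun _ => (1 : ℝ)) ξ ≤ p) ↔
      ∃ Ki : Fin p → Set (Rn n),
        (∀ i, MeasurableSet (Ki i)) ∧
        (Pairwise fun i j => Disjoint (Ki i) (Ki j)) ∧
        (⋃ i, Ki i) = K ∧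
        ∀ i, ∀ k : Zn n, k ≠ 0 → volume (Ki i ∩ {x | x - twoPi k ∈ Ki i}) = 0 := by
  classical
  constructor
  · intro hyp
    have aefin := ae_finite_Sx K hKm hKfin
    have hGood : ∀ᵐ x : Rn n, (Sx K x).Finite ∧ (Sx K x).ncard ≤ p := by
      filter_upwards [hyp, aefin] with x h1 h2
      refine ⟨h2, ?_⟩
      rw [Per_eq_ncard K x h2] at h1
      exact_mod_cast h1
    set B := {x : Rn n | ¬ ((Sx K x).Finite ∧ (Sx K x).ncard ≤ p)} with hB
    have hB0 : volume B = 0 := ae_iff.1 hGood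
    set win : Fin p → Set ℝ≥0∞ := fun i =>
      {r | (i.val : ℝ≥0∞) ≤ r ∧ (r < (i.val : ℝ≥0∞) + 1 ∨ (i.val + 1 : ℕ) = p)} with hwin
    have hwinm : ∀ i, MeasurableSet (win i) := by
      intro i
      by_cases h : (i.val + 1 : ℕ) = p
      · have : win i = Set.Ici (i.val : ℝ≥0∞) := by
          ext r; simp [hwin, h, Set.mem_Ici]
        rw [this]; exact measurableSet_Ici
      · have : win i = Set.Ici (i.val : ℝ≥0∞) ∩ Set.Iio ((i.val : ℝ≥0∞) + 1) := by
          ext r; simp [hwin, h, Set.mem_Ici, Set.mem_Iio]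
        rw [this]; exact measurableSet_Ici.inter measurableSet_Iio
    -- the key rank identity on good points
    have memKi : ∀ (i : Fin p) (x : Rn n), (Sx K x).Finite → (Sx K x).ncard ≤ p →
        x ∈ K ∩ rkE K ⁻¹' win i → (rnkSet K x 0).ncard = i.val := by
      rintro i x hfin hcard ⟨hxK, hxw⟩
      have hxw' : rkE K x ∈ win i := hxw
      obtain ⟨hle, hor⟩ := hxw'
      rw [rkE_eq_ncard K x hfin] at hle hor
      have hiR : i.val ≤ (rnkSet K x 0).ncard := Nat.cast_le.1 hle
      have hRle : (rnkSet K x 0).ncard ≤ i.val := by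
        rcases hor with hlt | heq
        · have h2 : ((rnkSet K x 0).ncard : ℝ≥0∞) < ((i.val + 1 : ℕ) : ℝ≥0∞) := by
            rwa [Nat.cast_add, Nat.cast_one]
          exact Nat.lt_succ_iff.1 (Nat.cast_lt.1 h2)
        · have h0mem : (0 : Zn n) ∈ Sx K x := by
            show x + twoPi 0 ∈ K; rw [twoPi_zero, add_zero]; exact hxK
          have h3 : (rnkSet K x 0).ncard ≤ (Sx K x).ncard - 1 := ncard_sep_le hfin h0mem
          omega
      omega
    refine ⟨fun i => K ∩ rkE K ⁻¹' win i,
      fun i => hKm.inter ((measurable_rkE K hKm) (hwinm i)), ?_, ?_, ?_⟩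
    · -- pairwise disjoint
      have key : ∀ i j : Fin p, i.val < j.val →
          Disjoint (K ∩ rkE K ⁻¹' win i) (K ∩ rkE K ⁻¹' win j) := by
        intro i j hij
        rw [Set.disjoint_left]
        rintro x ⟨-, hxi⟩ ⟨-, hxj⟩
        obtain ⟨h1le, h1or⟩ := (hxi : rkE K x ∈ win i)
        obtain ⟨h2le, h2or⟩ := (hxj : rkE K x ∈ win j)
        rcases h1or with hlt | heq
        · have hle2 : ((i.val + 1 : ℕ) : ℝ≥0∞) ≤ (j.val : ℝ≥0∞) := Nat.cast_le.2 hij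
          rw [Nat.cast_add, Nat.cast_one] at hle2
          exact absurd (lt_of_lt_of_le hlt (le_trans hle2 h2le)) (lt_irrefl _)
        · have : j.val < p := j.isLt
          omega
      intro i j hij
      rcases Nat.lt_or_ge i.val j.val with h | h
      · exact key i j h
      · have h2 : j.val < i.val := by
          rcases Nat.lt_or_ge j.val i.val with h' | h'
          · exact h'
          · exact absurd (Fin.ext (show i.val = j.val by omega)) hij
        exact (key j i h2).symm
    · -- union
      apply Set.Subset.antisymm
      · exact Set.iUnion_subset fun i => Set.inter_subset_left
      · intro x hxK
        rw [Set.mem_iUnion]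
        by_cases hge : ((p - 1 : ℕ) : ℝ≥0∞) ≤ rkE K x
        · refine ⟨⟨p - 1, by omega⟩, hxK, hge, Or.inr (by simp; omega)⟩
        · have hlt : rkE K x < ((p - 1 : ℕ) : ℝ≥0∞) := lt_of_not_ge hge
          have hrtop : rkE K x ≠ ⊤ := ne_top_of_lt hlt
          set m := ⌊(rkE K x).toReal⌋₊ with hm
          have hm1 : (m : ℝ≥0∞) ≤ rkE K x := by
            rw [← ENNReal.ofReal_natCast]
            exact ENNReal.ofReal_le_of_le_toReal (Nat.floor_le ENNReal.toReal_nonneg)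
          have hm2 : rkE K x < (m : ℝ≥0∞) + 1 := by
            rw [show ((m : ℝ≥0∞) + 1) = ENNReal.ofReal ((m : ℝ) + 1) by
              rw [ENNReal.ofReal_add (by positivity) zero_le_one, ENNReal.ofReal_natCast,
                ENNReal.ofReal_one]]
            exact (ENNReal.lt_ofReal_iff_toReal_lt hrtop).2 (Nat.lt_floor_add_one _)
          have hmp : m < p := by
            have h4 : (m : ℝ≥0∞) < ((p - 1 : ℕ) : ℝ≥0∞) := lt_of_le_of_lt hm1 hlt
            have := Nat.cast_lt.1 h4
            omega
          exact ⟨⟨m, hmp⟩, hxK, hm1, Or.inl hm2⟩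
    · -- null translated intersections
      intro i k hk
      have hsub : (K ∩ rkE K ⁻¹' win i) ∩ {x | x - twoPi k ∈ K ∩ rkE K ⁻¹' win i}
          ⊆ B ∪ (fun x : Rn n => x - twoPi k) ⁻¹' B := by
        rintro x ⟨hx1, hx2⟩
        by_cases hxB : x ∈ B
        · exact Or.inl hxB
        by_cases hyB : x - twoPi k ∈ B
        · exact Or.inr hyB
        exfalso
        have hgx : (Sx K x).Finite ∧ (Sx K x).ncard ≤ p := not_not.1 hxB
        have hgy : (Sx K (x - twoPi k)).Finite ∧ (Sx K (x - twoPi k)).ncard ≤ p :=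
          not_not.1 hyB
        have hR0 : (rnkSet K x 0).ncard = i.val := memKi i x hgx.1 hgx.2 hx1
        have hRk : (rnkSet K x (-k)).ncard = i.val := by
          rw [← rnkSet_shift K x k]
          exact memKi i (x - twoPi k) hgy.1 hgy.2 hx2
        have h0mem : (0 : Zn n) ∈ Sx K x := by
          show x + twoPi 0 ∈ K; rw [twoPi_zero, add_zero]; exact hx1.1
        have hkmem : (-k : Zn n) ∈ Sx K x := by
          show x + twoPi (-k) ∈ K
          rw [twoPi_neg, ← sub_eq_add_neg]
          exact hx2.1
        have hne : (0 : Zn n) ≠ -k := fun h => hk (by simpa using h.symm)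
        exact ncard_sep_ne hgx.1 h0mem hkmem hne (hR0.trans hRk.symm)
      refine measure_mono_null hsub (measure_union_null hB0 ?_)
      rw [show (fun x : Rn n => x - twoPi k) = fun x => x + -twoPi k from
        funext fun x => sub_eq_add_neg _ _]
      rw [measure_preimage_add_right]
      exact hB0
  · rintro ⟨Ki, hKim, hKd, hKu, hnull⟩
    set N := ⋃ (i : Fin p), ⋃ (q : Zn n × Zn n), ⋃ (_ : q.1 ≠ q.2),
      {ξ : Rn n | ξ + twoPi q.1 ∈ Ki i ∧ ξ + twoPi q.2 ∈ Ki i} with hN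
    have hN0 : volume N = 0 := by
      refine measure_iUnion_null fun i => measure_iUnion_null fun q =>
        measure_iUnion_null fun hne => ?_
      have harr : ∀ ξ : Rn n, ξ + twoPi q.1 - twoPi (q.1 - q.2) = ξ + twoPi q.2 := by
        intro ξ; rw [twoPi_sub]; abel
      have hEq : {ξ : Rn n | ξ + twoPi q.1 ∈ Ki i ∧ ξ + twoPi q.2 ∈ Ki i}
          = (fun ξ : Rn n => ξ + twoPi q.1) ⁻¹'
            (Ki i ∩ {x | x - twoPi (q.1 - q.2) ∈ Ki i}) := by
        ext ξ
        simp only [Set.mem_setOf_eq, Set.mem_preimage, Set.mem_inter_iff]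
        rw [harr ξ]
      rw [hEq, measure_preimage_add_right]
      exact hnull i (q.1 - q.2) (sub_ne_zero.2 hne)
    have hNae : ∀ᵐ ξ : Rn n, ξ ∉ N := by
      rw [ae_iff]
      convert hN0 using 2
      ext ξ; simp
    filter_upwards [hNae] with ξ hξ
    have hchoice : ∀ k : Zn n, k ∈ Sx K ξ → ∃ i : Fin p, ξ + twoPi k ∈ Ki i := by
      intro k hkm
      have h5 : ξ + twoPi k ∈ K := hkm
      rw [← hKu] at h5
      exact Set.mem_iUnion.1 h5
    let f : Sx K ξ → Fin p := fun k => Classical.choose (hchoice k k.2)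
    have hf : ∀ k : Sx K ξ, ξ + twoPi (k : Zn n) ∈ Ki (f k) :=
      fun k => Classical.choose_spec (hchoice k k.2)
    have hfinj : Function.Injective f := by
      intro a b hab
      by_contra hne
      have hne' : (a : Zn n) ≠ (b : Zn n) := fun h => hne (Subtype.ext h)
      apply hξ
      rw [hN]
      exact Set.mem_iUnion.2 ⟨f a, Set.mem_iUnion.2 ⟨((a : Zn n), (b : Zn n)),
        Set.mem_iUnion.2 ⟨hne', ⟨hf a, by rw [hab]; exact hf b⟩⟩⟩⟩
    haveI : Finite (Sx K ξ) := Finite.of_injective f hfinj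
    have hfin : (Sx K ξ).Finite := Set.finite_coe_iff.1 inferInstance
    have hcard : (Sx K ξ).ncard ≤ p := by
      have h1 : Nat.card (Sx K ξ) ≤ Nat.card (Fin p) :=
        Nat.card_le_card_of_injective f hfinj
      simpa [Nat.card_coe_set_eq, Nat.card_eq_fintype_card] using h1
    rw [Per_eq_ncard K ξ hfin]
    exact_mod_cast hcard
end

section
/- Let Φ be a countable and Ψ a finite subset of L²(ℝⁿ). Suppose: ∑_{φ∈Φ} |φ̂(ξ)|² < ∞ for a.e. ξ; for every s ∈ A*ℤⁿ and a.e. ξ, ∑_{φ∈Φ} φ̂((A*)⁻¹ξ) conj(φ̂((A*)⁻¹(ξ+2sπ))) − ∑_{φ∈Φ} φ̂(ξ) conj(φ̂(ξ+2sπ)) = ∑_{ψ∈Ψ} ψ̂(ξ) conj(ψ̂(ξ+2sπ)); and lim_{J→∞} ∑_{φ∈Φ} |φ̂((A*)^J ξ)|² = 0 for a.e. ξ. Then for every s ∈ ℤⁿ and a.e. ξ ∈ ℝⁿ, the series ∑_{j=1}^∞ ∑_{ψ∈Ψ} ψ̂((A*)^j ξ) conj(ψ̂((A*)^j(ξ+2sπ)))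 converges (as the limit of the partial sums over j ∈ {1,…,J}) to ∑_{φ∈Φ} φ̂(ξ) conj(φ̂(ξ+2sπ)). -/
open MeasureTheory Complex Filter Topology Matrix
open scoped ENNReal ComplexConjugate

section Aux

open MeasureTheory Matrix

lemma qmp_mulVec {n : ℕ} {M : Matrix (Fin n) (Fin n) ℝ} (hM : M.det ≠ 0) :
    Measure.QuasiMeasurePreserving (fun ξ : Rn n => M.mulVec ξ) volume volume := by
  have hfun : (fun ξ : Rn n => M.mulVec ξ) = Matrix.toLin' M := by
    funext ξ; simp [Matrix.toLin'_apply]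
  have hmeas : Measurable (fun ξ : Rn n => M.mulVec ξ) := by
    rw [hfun]
    exact (LinearMap.continuous_on_pi _).measurable
  refine ⟨hmeas, ?_⟩
  rw [hfun]
  rw [show (⇑(Matrix.toLin' M) : Rn n → Rn n) = ⇑(Matrix.toLin' M) from rfl,
    Real.map_matrix_volume_pi_eq_smul_volume_pi hM]
  exact Measure.smul_absolutelyContinuous

lemma matR_mul {n : ℕ} (M N : Matrix (Fin n) (Fin n) ℤ) :
    matR (M * N) = matR M * matR N := by
  exact Matrix.map_mul (f := Int.castRingHom ℝ)

lemma matR_pow {n : ℕ} (M : Matrix (Fin n) (Fin n) ℤ) (k : ℕ) :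
    matR (M ^ k) = (matR M) ^ k := by
  induction k with
  | zero => simp [matR, pow_zero, Matrix.map_one]
  | succ k ih => rw [pow_succ, pow_succ, matR_mul, ih]

lemma matR_transpose {n : ℕ} (M : Matrix (Fin n) (Fin n) ℤ) :
    matR M.transpose = (matR M).transpose := by
  simp [matR, Matrix.transpose_map]

lemma matR_mulVec_cast {n : ℕ} (M : Matrix (Fin n) (Fin n) ℤ) (v : Zn n) :
    (matR M).mulVec (fun i => (v i : ℝ)) = fun i => ((M.mulVec v) i : ℝ) := by
  funext i
  simp only [matR, Matrix.mulVec, dotProduct, Matrix.map_apply]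
  push_cast
  rfl

lemma twoPi_mulVec {n : ℕ} (M : Matrix (Fin n) (Fin n) ℤ) (s : Zn n) :
    twoPi (M.mulVec s) = (matR M).mulVec (twoPi s) := by
  have h : twoPi s = (2 * Real.pi) • (fun i => (s i : ℝ)) := by
    funext i; simp [twoPi, smul_eq_mul]
  rw [h, Matrix.mulVec_smul, matR_mulVec_cast]
  funext i
  simp [twoPi, smul_eq_mul]

end Aux

/-- **Key identity (eq. 3.14 in the paper).** Under the telescoping equations and the decay
condition, the partial sums `∑_{j=1}^J ∑_ψ ψ̂((A*)^jξ)·conj(ψ̂((A*)^j(ξ+2sπ)))` converge to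
`∑_φ φ̂(ξ)·conj(φ̂(ξ+2sπ))` for every `s ∈ ℤⁿ` and a.e. `ξ`. -/
theorem telescoping_series_identity
    {n : ℕ} (hn : 0 < n) (A : Matrix (Fin n) (Fin n) ℤ) (hA : IsDilationMatrix A)
    (φ hatφ : ℕ → Rn n → ℂ) (hφ : ∀ i, HasFT (φ i) (hatφ i))
    (p : ℕ) (ψ hatψ : Fin p → Rn n → ℂ) (hψ : ∀ i, HasFT (ψ i) (hatψ i))
    (h0 : ∀ᵐ ξ : Rn n, Summable fun i => ‖hatφ i ξ‖ ^ 2)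
    (h2 : ∀ s : Zn n, (∃ t : Zn n, A.transpose.mulVec t = s) →
      ∀ᵐ ξ : Rn n,
        (∑' i, hatφ i (((matR A).transpose⁻¹).mulVec ξ) *
            conj (hatφ i (((matR A).transpose⁻¹).mulVec (ξ + twoPi s)))) -
          (∑' i, hatφ i ξ * conj (hatφ i (ξ + twoPi s))) =
          ∑ i : Fin p, hatψ i ξ * conj (hatψ i (ξ + twoPi s)))
    (h3 : ∀ᵐ ξ : Rn n, Tendsto
      (fun J : ℕ => ∑' i, ‖hatφ i (((matR A).transpose ^ J).mulVec ξ)‖ ^ 2) atTop (nhds 0)) :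
    ∀ s : Zn n, ∀ᵐ ξ : Rn n,
      Tendsto (fun J : ℕ => ∑ j ∈ Finset.range J, ∑ i : Fin p,
          hatψ i (((matR A).transpose ^ (j + 1)).mulVec ξ) *
            conj (hatψ i (((matR A).transpose ^ (j + 1)).mulVec (ξ + twoPi s))))
        atTop (nhds (∑' i, hatφ i ξ * conj (hatφ i (ξ + twoPi s)))) := by
  intro s
  set B := (matR A).transpose with hBdef
  have hB : B.det ≠ 0 := by rw [hBdef, Matrix.det_transpose]; exact hA.1
  have hBk : ∀ k : ℕ, (B ^ k).det ≠ 0 := fun k => by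
    rw [Matrix.det_pow]; exact pow_ne_zero _ hB
  have hBpow : ∀ k : ℕ, matR (A.transpose ^ k) = B ^ k := fun k => by
    rw [matR_pow, matR_transpose, hBdef]
  -- inverse cancellation
  have hinv : ∀ (j : ℕ) (x : Rn n), B⁻¹.mulVec ((B ^ (j + 1)).mulVec x) = (B ^ j).mulVec x := by
    intro j x
    rw [Matrix.mulVec_mulVec, pow_succ', ← mul_assoc,
      Matrix.nonsing_inv_mul B (Ne.isUnit hB), one_mul]
  -- the h2 statements pulled back
  have H2 : ∀ᵐ ξ : Rn n, ∀ j : ℕ,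
      (∑' i, hatφ i ((B ^ j).mulVec ξ) *
          conj (hatφ i ((B ^ j).mulVec (ξ + twoPi s)))) -
        (∑' i, hatφ i ((B ^ (j + 1)).mulVec ξ) *
          conj (hatφ i ((B ^ (j + 1)).mulVec (ξ + twoPi s)))) =
        ∑ i : Fin p, hatψ i ((B ^ (j + 1)).mulVec ξ) *
          conj (hatψ i ((B ^ (j + 1)).mulVec (ξ + twoPi s))) := by
    rw [ae_all_iff]
    intro j
    have hwit : ∃ t : Zn n, A.transpose.mulVec t = (A.transpose ^ (j + 1)).mulVec s :=
      ⟨(A.transpose ^ j).mulVec s, by rw [Matrix.mulVec_mulVec, ← pow_succ']⟩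
    have h2j := h2 ((A.transpose ^ (j + 1)).mulVec s) hwit
    have := (qmp_mulVec (hBk (j + 1))).tendsto_ae.eventually h2j
    filter_upwards [this] with ξ hξ
    have htp : twoPi ((A.transpose ^ (j + 1)).mulVec s) = (B ^ (j + 1)).mulVec (twoPi s) := by
      rw [twoPi_mulVec, hBpow]
    rw [htp] at hξ
    rw [← Matrix.mulVec_add] at hξ
    rw [hinv j ξ, hinv j (ξ + twoPi s), Matrix.mulVec_add] at hξ
    rw [Matrix.mulVec_add]
    exact hξ
  -- summability, pulled back
  have H0x : ∀ᵐ ξ : Rn n, ∀ k : ℕ,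
      Summable fun i => ‖hatφ i ((B ^ k).mulVec ξ)‖ ^ 2 := by
    rw [ae_all_iff]
    intro k
    exact (qmp_mulVec (hBk k)).tendsto_ae.eventually h0
  have mp : Measure.QuasiMeasurePreserving (fun ξ : Rn n => ξ + twoPi s) volume volume :=
    (measurePreserving_add_right volume (twoPi s)).quasiMeasurePreserving
  have H0y : ∀ᵐ ξ : Rn n, ∀ k : ℕ,
      Summable fun i => ‖hatφ i ((B ^ k).mulVec (ξ + twoPi s))‖ ^ 2 :=
    mp.tendsto_ae.eventually H0x
  have H3y : ∀ᵐ ξ : Rn n, Tendsto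
      (fun J : ℕ => ∑' i, ‖hatφ i ((B ^ J).mulVec (ξ + twoPi s))‖ ^ 2) atTop (nhds 0) :=
    mp.tendsto_ae.eventually h3
  filter_upwards [H2, H0x, H0y, h3, H3y] with ξ h2' h0x h0y h3x h3y
  set y := ξ + twoPi s with hy
  set F : ℕ → ℂ := fun j => ∑' i, hatφ i ((B ^ j).mulVec ξ) * conj (hatφ i ((B ^ j).mulVec y))
    with hF
  -- partial sums telescope
  have htel : ∀ J : ℕ, (∑ j ∈ Finset.range J, ∑ i : Fin p,
      hatψ i ((B ^ (j + 1)).mulVec ξ) * conj (hatψ i ((B ^ (j + 1)).mulVec y)))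
      = F 0 - F J := by
    intro J
    induction J with
    | zero => simp
    | succ J ih =>
      rw [Finset.sum_range_succ, ih, ← h2' J]
      ring
  -- F J → 0
  have hFlim : Tendsto F atTop (nhds 0) := by
    have hbound : ∀ J : ℕ, ‖F J‖ ≤
        (∑' i, ‖hatφ i ((B ^ J).mulVec ξ)‖ ^ 2) +
        (∑' i, ‖hatφ i ((B ^ J).mulVec y)‖ ^ 2) := by
      intro J
      have hsx := h0x J
      have hsy := h0y J
      have hterm : ∀ i : ℕ, ‖hatφ i ((B ^ J).mulVec ξ) * conj (hatφ i ((B ^ J).mulVec y))‖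
          ≤ ‖hatφ i ((B ^ J).mulVec ξ)‖ ^ 2 + ‖hatφ i ((B ^ J).mulVec y)‖ ^ 2 := by
        intro i
        rw [norm_mul, RCLike.norm_conj]
        nlinarith [sq_nonneg (‖hatφ i ((B ^ J).mulVec ξ)‖ - ‖hatφ i ((B ^ J).mulVec y)‖),
          norm_nonneg (hatφ i ((B ^ J).mulVec ξ)), norm_nonneg (hatφ i ((B ^ J).mulVec y))]
      have hsum : Summable fun i : ℕ =>
          ‖hatφ i ((B ^ J).mulVec ξ) * conj (hatφ i ((B ^ J).mulVec y))‖ := by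
        apply Summable.of_nonneg_of_le (fun i => norm_nonneg _) hterm
        exact hsx.add hsy
      calc ‖F J‖ ≤ ∑' i, ‖hatφ i ((B ^ J).mulVec ξ) * conj (hatφ i ((B ^ J).mulVec y))‖ :=
            norm_tsum_le_tsum_norm hsum
        _ ≤ ∑' i, (‖hatφ i ((B ^ J).mulVec ξ)‖ ^ 2 + ‖hatφ i ((B ^ J).mulVec y)‖ ^ 2) :=
            Summable.tsum_le_tsum hterm hsum (hsx.add hsy)
        _ = _ := (Summable.tsum_add hsx hsy)
    have hg : Tendsto (fun J : ℕ =>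
        (∑' i, ‖hatφ i ((B ^ J).mulVec ξ)‖ ^ 2) +
        (∑' i, ‖hatφ i ((B ^ J).mulVec y)‖ ^ 2)) atTop (nhds 0) := by
      have := h3x.add h3y
      simpa using this
    exact squeeze_zero_norm hbound hg
  have hF0 : F 0 = ∑' i, hatφ i ξ * conj (hatφ i (ξ + twoPi s)) := by
    simp [hF, hy, Matrix.one_mulVec]
  have : Tendsto (fun J : ℕ => F 0 - F J) atTop (nhds (F 0)) := by
    have h' : Tendsto (fun J : ℕ => F 0 - F J) atTop (nhds (F 0 - 0)) :=
      Tendsto.sub tendsto_const_nhds hFlim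
    simpa using h'
  rw [← hF0]
  refine this.congr fun J => ?_
  rw [htel J]
end
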